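/- The set Λ = {m + nφ : m, n ∈ ℤ, -1 ≤ m + nφ' ≤ φ - 1} is uniformly discrete in ℝ: there exists r > 0 such that any two distinct elements of Λ are at distance at least r. -/
import Mathlib


noncomputable def goldenφ : ℝ := (1 + Real.sqrt 5) / 2
noncomputable def goldenφ' : ℝ := (1 - Real.sqrt 5) / 2

noncomputable def goldenΛ : Set ℝ :=
  {x | ∃ m n : ℤ, x = m + n * goldenφ ∧
    -1 ≤ (m : ℝ) + n * goldenφ' ∧ (m : ℝ) + n * goldenφ' ≤ goldenφ - 1}

theorem stmt1 :
    ∃ r > 0, ∀ x ∈ goldenΛ, ∀ y ∈ goldenΛ, x ≠ y → r ≤ |x - y| := by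
  have h5 : Real.sqrt 5 ^ 2 = 5 := Real.sq_sqrt (by norm_num)
  have h5nn : (0:ℝ) ≤ Real.sqrt 5 := Real.sqrt_nonneg 5
  have hlt : Real.sqrt 5 < 3 := by nlinarith
  have hirr : Irrational (Real.sqrt 5) := by
    have := Nat.Prime.irrational_sqrt (p := 5) (by norm_num)
    simpa using this
  refine ⟨1/2, by norm_num, ?_⟩
  rintro x ⟨m, n, rfl, hx1, hx2⟩ y ⟨m', n', rfl, hy1, hy2⟩ hxy
  set a : ℤ := m - m'
  set b : ℤ := n - n'
  have hd : (↑m + ↑n * goldenφ) - (↑m' + ↑n' * goldenφ) = (a:ℝ) + b * goldenφ := by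
    push_cast [a, b]; ring
  have hd' : ((m:ℝ) + n * goldenφ') - ((m':ℝ) + n' * goldenφ') = (a:ℝ) + b * goldenφ' := by
    push_cast [a, b]; ring
  -- product is an integer
  have hprod : ((a:ℝ) + b * goldenφ) * ((a:ℝ) + b * goldenφ')
      = ((a^2 + a*b - b^2 : ℤ) : ℝ) := by
    unfold goldenφ goldenφ'
    push_cast
    linear_combination (-(b:ℝ)^2/4) * h5
  have hdne : (a:ℝ) + b * goldenφ ≠ 0 := by
    rw [← hd]; exact sub_ne_zero.mpr hxy
  have hd'ne : (a:ℝ) + b * goldenφ' ≠ 0 := by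
    intro h0
    by_cases hb : (b:ℝ) = 0
    · have ha : (a:ℝ) = 0 := by rw [hb] at h0; simpa using h0
      exact hdne (by rw [ha, hb]; ring)
    · apply hirr
      refine ⟨(2*a + b) / b, ?_⟩
      unfold goldenφ' at h0
      have h0' : Real.sqrt 5 * b = 2*a + b := by
        field_simp at h0; linarith
      have : Real.sqrt 5 = ((2*a + b : ℝ)) / b := by
        rw [eq_div_iff hb]; linarith
      rw [this]; push_cast; ring
  have hkne : (a^2 + a*b - b^2 : ℤ) ≠ 0 := by
    intro h
    rw [h] at hprod
    simp at hprod
    rcases hprod with h | h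
    · exact hdne h
    · exact hd'ne h
  have hk1 : (1:ℝ) ≤ |((a^2 + a*b - b^2 : ℤ) : ℝ)| := by
    rw [← Int.cast_abs]
    exact_mod_cast Int.one_le_abs hkne
  -- bound on conjugate
  have hφlt2 : goldenφ < 2 := by unfold goldenφ; linarith
  have hbdd : |(a:ℝ) + b * goldenφ'| ≤ goldenφ := by
    rw [← hd']
    rw [abs_sub_le_iff]
    constructor <;> linarith
  have hbdd2 : |(a:ℝ) + b * goldenφ'| < 2 := lt_of_le_of_lt hbdd hφlt2
  have key : 1 ≤ |(a:ℝ) + b * goldenφ| * |(a:ℝ) + b * goldenφ'| := by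
    rw [← abs_mul, hprod]; exact hk1
  have hpos : 0 < |(a:ℝ) + b * goldenφ| := abs_pos.mpr hdne
  rw [hd]
  nlinarith [abs_nonneg ((a:ℝ) + b * goldenφ')]
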